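/- Let γ : Z_n → ℕ and i ∈ {1,…,n}, and let −^a +^b be the reduced i-signature of γ. Then (γ^{i,+})^{i,−} = γ; and if a > 0, then (γ^{i,−})^{i,+} = γ. (These are the relations ẽ_i f̃_i = id and f̃_i ẽ_i = id, where defined, for the combinatorial crystal operators of type A_n.) -/

import Mathlib

/-!
STATEMENT 16: For γ : Z_n → ℕ and i ∈ {1,…,n}, with reduced i-signature
−^a +^b: (γ^{i,+})^{i,−} = γ, and if a > 0 then (γ^{i,−})^{i,+} = γ.
(The relations ẽ_i f̃_i = id and f̃_i ẽ_i = id, where defined, for the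
combinatorial crystal operators of type A_n.  Functions on
Z_n = {(k,l) : 1 ≤ k ≤ l ≤ n} are encoded as functions γ : ℤ × ℤ → ℕ
supported on Z_n.)
-/


/-- The two-letter alphabet {+,−}. -/
inductive Sign : Type
  | plus : Sign
  | minus : Sign
deriving DecidableEq

/-- Repeatedly delete adjacent pairs "+−" until none remain, producing the
reduced word −^a +^b (processing the word from the right). -/
def sigReduce : List Sign → List Sign
  | [] => []
  | s :: w =>
    let t := sigReduce w
    if s = Sign.plus ∧ t.head? = some Sign.minus then t.tail else s :: t

/-- The block of the i-signature word contributed by the pairs (k,i) and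
(k,i−1): γ(k,i) symbols '−' followed by γ(k,i−1) symbols '+'. -/
def sigBlock (γ : ℤ × ℤ → ℕ) (i k : ℤ) : List Sign :=
  List.replicate (γ (k, i)) Sign.minus ++ List.replicate (γ (k, i - 1)) Sign.plus

/-- The i-signature word w_i(γ): the blocks for k = 1, …, i listed in
increasing order of k. -/
def sigWord (γ : ℤ × ℤ → ℕ) (i : ℤ) : List Sign :=
  ((List.range i.toNat).map fun j => sigBlock γ i (1 + j)).flatten

/-- The part of the i-signature word consisting of the blocks k, k+1, …, i. -/
def sigSuffix (γ : ℤ × ℤ → ℕ) (i k : ℤ) : List Sign :=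
  ((List.range (i + 1 - k).toNat).map fun j => sigBlock γ i (k + j)).flatten

/-- The part of the i-signature word consisting of the blocks 1, …, k−1. -/
def sigPrefix (γ : ℤ × ℤ → ℕ) (i k : ℤ) : List Sign :=
  ((List.range (k - 1).toNat).map fun j => sigBlock γ i (1 + j)).flatten

/-- The number a of '−'s in the reduced i-signature −^a +^b of γ. -/
def aCount (γ : ℤ × ℤ → ℕ) (i : ℤ) : ℕ :=
  (sigReduce (sigWord γ i)).count Sign.minus

/-- The number b of '+'s in the reduced i-signature −^a +^b of γ. -/
def bCount (γ : ℤ × ℤ → ℕ) (i : ℤ) : ℕ :=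
  (sigReduce (sigWord γ i)).count Sign.plus

/-- The index k' such that the pair (k', i−1) contributes the leftmost
surviving '+' of the reduced i-signature of γ: a '+' from the block k survives
the cancellation precisely when γ(k,i−1) exceeds the number of '−'s in the
reduced word of the blocks k+1, …, i.  If there is no '+' in the reduced
i-signature, then k' = i. -/
noncomputable def kPlus (γ : ℤ × ℤ → ℕ) (i : ℤ) : ℤ :=
  let S := (Finset.Icc (1 : ℤ) (i - 1)).filter fun k =>
    (sigReduce (sigSuffix γ i (k + 1))).count Sign.minus < γ (k, i - 1)
  if h : S.Nonempty then S.min' h else i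

/-- The index k'' such that the pair (k'', i) contributes the rightmost
surviving '−' of the reduced i-signature of γ: a '−' from the block k survives
the cancellation precisely when γ(k,i) exceeds the number of '+'s in the
reduced word of the blocks 1, …, k−1.  (Meaningful when a > 0; otherwise the
value defaults to i.) -/
noncomputable def kMinus (γ : ℤ × ℤ → ℕ) (i : ℤ) : ℤ :=
  let S := (Finset.Icc (1 : ℤ) i).filter fun k =>
    (sigReduce (sigPrefix γ i k)).count Sign.plus < γ (k, i)
  if h : S.Nonempty then S.max' h else i

/-- The operator γ ↦ γ^{i,+}: add 1 at (k',i) and subtract 1 at (k',i−1),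
where (k',i−1) is the pair contributing the leftmost surviving '+' of the
reduced i-signature; if there is no such '+' then k' = i and only γ(i,i) is
increased by 1. -/
noncomputable def gammaPlus (γ : ℤ × ℤ → ℕ) (i : ℤ) : ℤ × ℤ → ℕ := fun p =>
  if p = (kPlus γ i, i) then γ p + 1
  else if kPlus γ i < i ∧ p = (kPlus γ i, i - 1) then γ p - 1
  else γ p

/-- The operator γ ↦ γ^{i,−} (defined when a > 0): subtract 1 at (k'',i) and
add 1 at (k'',i−1), where (k'',i) is the pair contributing the rightmost
surviving '−' of the reduced i-signature; if k'' = i then only γ(i,i) is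
decreased by 1. -/
noncomputable def gammaMinus (γ : ℤ × ℤ → ℕ) (i : ℤ) : ℤ × ℤ → ℕ := fun p =>
  if p = (kMinus γ i, i) then γ p - 1
  else if kMinus γ i < i ∧ p = (kMinus γ i, i - 1) then γ p + 1
  else γ p


namespace Stmt16Aux

def step : Sign → ℕ × ℕ → ℕ × ℕ
  | Sign.minus => fun p => (p.1 + 1, p.2)
  | Sign.plus => fun p => if 0 < p.1 then (p.1 - 1, p.2) else (p.1, p.2 + 1)

def red2 (w : List Sign) : ℕ × ℕ := w.foldr step (0, 0)

lemma red2_nil : red2 [] = (0, 0) := rfl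

lemma red2_cons (s : Sign) (w : List Sign) : red2 (s :: w) = step s (red2 w) := rfl

lemma sigReduce_eq (w : List Sign) :
    sigReduce w = List.replicate (red2 w).1 Sign.minus ++ List.replicate (red2 w).2 Sign.plus := by
  induction w with
  | nil => rfl
  | cons s w ih =>
    rw [sigReduce]
    cases s with
    | minus =>
      simp only [red2_cons, step, ih]
      simp [List.replicate_succ]
    | plus =>
      simp only [red2_cons, step, ih]
      rcases ha : (red2 w).1 with _ | a
      · have hh : (List.replicate (red2 w).2 Sign.plus).head? ≠ some Sign.minus := by
          cases hb : (red2 w).2 <;> simp [List.replicate_succ]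
        simp [ha, hh, List.replicate_succ]
      · simp [List.replicate_succ]

lemma countMinus (w : List Sign) : (sigReduce w).count Sign.minus = (red2 w).1 := by
  rw [sigReduce_eq]
  simp [List.count_replicate]

lemma countPlus (w : List Sign) : (sigReduce w).count Sign.plus = (red2 w).2 := by
  rw [sigReduce_eq]
  simp [List.count_replicate]

lemma foldr_step (w : List Sign) (a b : ℕ) :
    w.foldr step (a, b) =
      ((red2 w).1 + (a - (red2 w).2), b + ((red2 w).2 - a)) := by
  induction w with
  | nil => simp [red2]
  | cons s w ih =>
    have h1 : (s :: w).foldr step (a, b) = step s (w.foldr step (a, b)) := rfl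
    rw [h1, ih, red2_cons]
    cases s with
    | minus => simp [step]; omega
    | plus =>
      simp only [step]
      rcases hA : (red2 w).1 with _ | A <;>
        · split_ifs <;> simp_all <;> (try constructor) <;> omega

lemma red2_append (u v : List Sign) :
    red2 (u ++ v) = ((red2 u).1 + ((red2 v).1 - (red2 u).2),
                     (red2 v).2 + ((red2 u).2 - (red2 v).1)) := by
  have : red2 (u ++ v) = u.foldr step (red2 v) := by
    rw [red2, List.foldr_append]; rfl
  rw [this, show red2 v = ((red2 v).1, (red2 v).2) from rfl, foldr_step]

lemma red2_replicate_minus (n : ℕ) : red2 (List.replicate n Sign.minus) = (n, 0) := by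
  induction n with
  | zero => rfl
  | succ n ih => rw [List.replicate_succ, red2_cons, ih]; rfl

lemma red2_replicate_plus (n : ℕ) : red2 (List.replicate n Sign.plus) = (0, n) := by
  induction n with
  | zero => rfl
  | succ n ih => rw [List.replicate_succ, red2_cons, ih, step]; simp

lemma red2_block (γ : ℤ × ℤ → ℕ) (i k : ℤ) :
    red2 (sigBlock γ i k) = (γ (k, i), γ (k, i - 1)) := by
  rw [sigBlock, red2_append, red2_replicate_minus, red2_replicate_plus]
  simp

end Stmt16Aux

namespace Stmt16Aux

variable {γ δ : ℤ × ℤ → ℕ} {i k : ℤ}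

def aSuf (γ : ℤ × ℤ → ℕ) (i k : ℤ) : ℕ := (red2 (sigSuffix γ i k)).1
def aPre (γ : ℤ × ℤ → ℕ) (i k : ℤ) : ℕ := (red2 (sigPrefix γ i k)).1
def bPre (γ : ℤ × ℤ → ℕ) (i k : ℤ) : ℕ := (red2 (sigPrefix γ i k)).2

lemma sigPrefix_eq' :
    sigPrefix γ i k = ((List.range (k - 1).toNat).map fun j : ℕ => sigBlock γ i (1 + (j : ℤ))).flatten := by
  rw [sigPrefix]
  simp only [bind_pure_comp, List.map_eq_map, List.map_map]
  rfl

lemma sigSuffix_eq' :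
    sigSuffix γ i k = ((List.range (i + 1 - k).toNat).map fun j : ℕ => sigBlock γ i (k + (j : ℤ))).flatten := by
  rw [sigSuffix]
  simp only [bind_pure_comp, List.map_eq_map, List.map_map]
  rfl

lemma sigSuffix_nil (h : i < k) : sigSuffix γ i k = [] := by
  rw [sigSuffix_eq']
  have h0 : (i + 1 - k).toNat = 0 := by omega
  simp [h0]

lemma sigSuffix_cons (h : k ≤ i) :
    sigSuffix γ i k = sigBlock γ i k ++ sigSuffix γ i (k + 1) := by
  rw [sigSuffix_eq', sigSuffix_eq']
  have h2 : (i + 1 - k).toNat = (i + 1 - (k + 1)).toNat + 1 := by omega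
  rw [h2, List.range_succ_eq_map]
  simp only [List.map_cons, List.map_map, List.flatten_cons]
  congr 1
  · norm_num
  · congr 1
    apply List.map_congr_left
    intro j _
    simp only [Function.comp_apply, Nat.succ_eq_add_one]
    congr 1
    push_cast
    ring

lemma sigPrefix_one : sigPrefix γ i 1 = [] := by
  rw [sigPrefix_eq']
  norm_num

lemma sigPrefix_snoc (h : 1 ≤ k) :
    sigPrefix γ i (k + 1) = sigPrefix γ i k ++ sigBlock γ i k := by
  rw [sigPrefix_eq', sigPrefix_eq']
  have h2 : (k + 1 - 1).toNat = (k - 1).toNat + 1 := by omega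
  rw [h2, List.range_succ, List.map_append, List.flatten_append]
  simp only [List.map_cons, List.map_nil, List.flatten_cons, List.flatten_nil, List.append_nil]
  congr 2
  omega

lemma sigWord_eq_sigPrefix : sigWord γ i = sigPrefix γ i (i + 1) := by
  rw [sigWord, sigPrefix]
  norm_num

lemma sigWord_eq_sigSuffix : sigWord γ i = sigSuffix γ i 1 := by
  rw [sigWord, sigSuffix]
  norm_num

lemma sigSuffix_congr (h : ∀ j, k ≤ j → j ≤ i → sigBlock γ i j = sigBlock δ i j) :
    sigSuffix γ i k = sigSuffix δ i k := by
  rw [sigSuffix_eq', sigSuffix_eq']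
  congr 1
  apply List.map_congr_left
  intro j hj
  rw [List.mem_range] at hj
  apply h <;> omega

lemma sigPrefix_congr (h : ∀ j, 1 ≤ j → j < k → sigBlock γ i j = sigBlock δ i j) :
    sigPrefix γ i k = sigPrefix δ i k := by
  rw [sigPrefix_eq', sigPrefix_eq']
  congr 1
  apply List.map_congr_left
  intro j hj
  rw [List.mem_range] at hj
  apply h <;> omega

lemma aSuf_rec (h : k ≤ i) :
    aSuf γ i k = γ (k, i) + (aSuf γ i (k + 1) - γ (k, i - 1)) := by
  rw [aSuf, sigSuffix_cons h, red2_append, red2_block]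
  rfl

lemma aSuf_top (h : i < k) : aSuf γ i k = 0 := by
  rw [aSuf, sigSuffix_nil h]; rfl

lemma bPre_rec (h : 1 ≤ k) :
    bPre γ i (k + 1) = γ (k, i - 1) + (bPre γ i k - γ (k, i)) := by
  rw [bPre, sigPrefix_snoc h, red2_append, red2_block]
  rfl

lemma aPre_rec (h : 1 ≤ k) :
    aPre γ i (k + 1) = aPre γ i k + (γ (k, i) - bPre γ i k) := by
  rw [aPre, sigPrefix_snoc h, red2_append, red2_block]
  rfl

lemma bPre_one : bPre γ i 1 = 0 := by
  rw [bPre, sigPrefix_one]; rfl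

lemma aPre_one : aPre γ i 1 = 0 := by
  rw [aPre, sigPrefix_one]; rfl

lemma aCount_eq : aCount γ i = aPre γ i (i + 1) := by
  rw [aCount, countMinus, aPre, sigWord_eq_sigPrefix]

lemma kPlus_eq_of (h1 : 1 ≤ k) (h2 : k ≤ i - 1)
    (hmem : aSuf γ i (k + 1) < γ (k, i - 1))
    (hmin : ∀ j, 1 ≤ j → j < k → γ (j, i - 1) ≤ aSuf γ i (j + 1)) :
    kPlus γ i = k := by
  rw [kPlus]
  have hk : k ∈ (Finset.Icc (1 : ℤ) (i - 1)).filter fun k =>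
      (sigReduce (sigSuffix γ i (k + 1))).count Sign.minus < γ (k, i - 1) := by
    rw [Finset.mem_filter, Finset.mem_Icc, countMinus]
    exact ⟨⟨h1, h2⟩, hmem⟩
  rw [dif_pos ⟨k, hk⟩]
  apply le_antisymm
  · exact Finset.min'_le _ _ hk
  · apply Finset.le_min'
    intro y hy
    rw [Finset.mem_filter, Finset.mem_Icc, countMinus] at hy
    by_contra hlt
    push_neg at hlt
    exact absurd hy.2 (not_lt.2 (hmin y hy.1.1 hlt))

lemma kPlus_eq_i (hmin : ∀ j, 1 ≤ j → j ≤ i - 1 → γ (j, i - 1) ≤ aSuf γ i (j + 1)) :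
    kPlus γ i = i := by
  rw [kPlus, dif_neg]
  rintro ⟨x, hx⟩
  rw [Finset.mem_filter, Finset.mem_Icc, countMinus] at hx
  exact absurd hx.2 (not_lt.2 (hmin x hx.1.1 hx.1.2))

lemma kMinus_eq_of (h1 : 1 ≤ k) (h2 : k ≤ i)
    (hmem : bPre γ i k < γ (k, i))
    (hmax : ∀ j, k < j → j ≤ i → γ (j, i) ≤ bPre γ i j) :
    kMinus γ i = k := by
  rw [kMinus]
  have hk : k ∈ (Finset.Icc (1 : ℤ) i).filter fun k =>
      (sigReduce (sigPrefix γ i k)).count Sign.plus < γ (k, i) := by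
    rw [Finset.mem_filter, Finset.mem_Icc, countPlus]
    exact ⟨⟨h1, h2⟩, hmem⟩
  rw [dif_pos ⟨k, hk⟩]
  apply le_antisymm
  · apply Finset.max'_le
    intro y hy
    rw [Finset.mem_filter, Finset.mem_Icc, countPlus] at hy
    by_contra hlt
    push_neg at hlt
    exact absurd hy.2 (not_lt.2 (hmax y hlt hy.1.2))
  · exact Finset.le_max' _ _ hk

lemma aCount_pos_nonempty (ha : 0 < aCount γ i) (hi1 : 1 ≤ i) :
    ∃ k, 1 ≤ k ∧ k ≤ i ∧ bPre γ i k < γ (k, i) := by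
  by_contra hS
  push_neg at hS
  have key : ∀ K : ℤ, 1 ≤ K → K ≤ i + 1 → aPre γ i K = 0 := by
    intro K hK
    refine Int.le_induction (motive := fun K _ => K ≤ i + 1 → aPre γ i K = 0) ?_ ?_ K hK
    · intro _
      exact aPre_one
    · intro K hK1 ih hKi
      rw [aPre_rec hK1, ih (by omega)]
      have := hS K hK1 (by omega)
      omega
  rw [aCount_eq] at ha
  rw [key (i + 1) (by omega) le_rfl] at ha
  exact absurd ha (lt_irrefl 0)
end Stmt16Aux

namespace Stmt16Aux

variable {γ δ : ℤ × ℤ → ℕ} {i k : ℤ}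

lemma sigBlock_congr (hv1 : γ (k, i) = δ (k, i)) (hv2 : γ (k, i - 1) = δ (k, i - 1)) :
    sigBlock γ i k = sigBlock δ i k := by
  rw [sigBlock, sigBlock, hv1, hv2]

lemma kPlus_spec (hS : ∃ k, 1 ≤ k ∧ k ≤ i - 1 ∧ aSuf γ i (k + 1) < γ (k, i - 1)) :
    (1 ≤ kPlus γ i ∧ kPlus γ i ≤ i - 1) ∧
      aSuf γ i (kPlus γ i + 1) < γ (kPlus γ i, i - 1) ∧
      ∀ j, 1 ≤ j → j < kPlus γ i → γ (j, i - 1) ≤ aSuf γ i (j + 1) := by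
  obtain ⟨k, hk1, hk2, hk3⟩ := hS
  have hkmem : k ∈ (Finset.Icc (1 : ℤ) (i - 1)).filter fun k =>
      (sigReduce (sigSuffix γ i (k + 1))).count Sign.minus < γ (k, i - 1) := by
    rw [Finset.mem_filter, Finset.mem_Icc, countMinus]
    exact ⟨⟨hk1, hk2⟩, hk3⟩
  have hne : ((Finset.Icc (1 : ℤ) (i - 1)).filter fun k =>
      (sigReduce (sigSuffix γ i (k + 1))).count Sign.minus < γ (k, i - 1)).Nonempty := ⟨k, hkmem⟩
  have heq : kPlus γ i = ((Finset.Icc (1 : ℤ) (i - 1)).filter fun k =>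
      (sigReduce (sigSuffix γ i (k + 1))).count Sign.minus < γ (k, i - 1)).min' hne := by
    rw [kPlus]; rw [dif_pos hne]
  rw [heq]
  have hmem := Finset.min'_mem _ hne
  rw [Finset.mem_filter, Finset.mem_Icc, countMinus] at hmem
  refine ⟨⟨hmem.1.1, hmem.1.2⟩, hmem.2, ?_⟩
  intro j hj1 hj2
  by_contra hcon
  push_neg at hcon
  have hjmem : j ∈ (Finset.Icc (1 : ℤ) (i - 1)).filter fun k =>
      (sigReduce (sigSuffix γ i (k + 1))).count Sign.minus < γ (k, i - 1) := by
    rw [Finset.mem_filter, Finset.mem_Icc, countMinus]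
    exact ⟨⟨hj1, by omega⟩, hcon⟩
  exact absurd (Finset.min'_le _ _ hjmem) (by omega)

lemma kMinus_spec (hS : ∃ k, 1 ≤ k ∧ k ≤ i ∧ bPre γ i k < γ (k, i)) :
    (1 ≤ kMinus γ i ∧ kMinus γ i ≤ i) ∧
      bPre γ i (kMinus γ i) < γ (kMinus γ i, i) ∧
      ∀ j, kMinus γ i < j → j ≤ i → γ (j, i) ≤ bPre γ i j := by
  obtain ⟨k, hk1, hk2, hk3⟩ := hS
  have hkmem : k ∈ (Finset.Icc (1 : ℤ) i).filter fun k =>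
      (sigReduce (sigPrefix γ i k)).count Sign.plus < γ (k, i) := by
    rw [Finset.mem_filter, Finset.mem_Icc, countPlus]
    exact ⟨⟨hk1, hk2⟩, hk3⟩
  have hne : ((Finset.Icc (1 : ℤ) i).filter fun k =>
      (sigReduce (sigPrefix γ i k)).count Sign.plus < γ (k, i)).Nonempty := ⟨k, hkmem⟩
  have heq : kMinus γ i = ((Finset.Icc (1 : ℤ) i).filter fun k =>
      (sigReduce (sigPrefix γ i k)).count Sign.plus < γ (k, i)).max' hne := by
    rw [kMinus]; rw [dif_pos hne]
  rw [heq]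
  have hmem := Finset.max'_mem _ hne
  rw [Finset.mem_filter, Finset.mem_Icc, countPlus] at hmem
  refine ⟨⟨hmem.1.1, hmem.1.2⟩, hmem.2, ?_⟩
  intro j hj1 hj2
  by_contra hcon
  push_neg at hcon
  have hjmem : j ∈ (Finset.Icc (1 : ℤ) i).filter fun k =>
      (sigReduce (sigPrefix γ i k)).count Sign.plus < γ (k, i) := by
    rw [Finset.mem_filter, Finset.mem_Icc, countPlus]
    exact ⟨⟨by omega, hj2⟩, hcon⟩
  exact absurd (Finset.le_max' _ _ hjmem) (by omega)

/-- L1: if no plus survives strictly before block `K`, then the surviving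
pluses of the prefix are at most the surviving minuses of the suffix. -/
lemma bPre_le_aSuf (hi1 : 1 ≤ i) (K : ℤ) (hK : 1 ≤ K) (hKi : K ≤ i + 1)
    (hmin : ∀ j, 1 ≤ j → j < K → γ (j, i - 1) ≤ aSuf γ i (j + 1)) :
    bPre γ i K ≤ aSuf γ i K := by
  refine Int.le_induction
    (motive := fun K _ => K ≤ i + 1 →
      (∀ j, 1 ≤ j → j < K → γ (j, i - 1) ≤ aSuf γ i (j + 1)) →
      bPre γ i K ≤ aSuf γ i K) ?_ ?_ K hK hKi hmin
  · intro _ _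
    rw [bPre_one]
    exact Nat.zero_le _
  · intro K hK1 ih hKi hmin
    have h1 := aSuf_rec (γ := γ) (i := i) (k := K) (by omega)
    have h2 := bPre_rec (γ := γ) (i := i) (k := K) hK1
    have h3 := hmin K hK1 (by omega)
    have h4 := ih (by omega) (fun j hj1 hj2 => hmin j hj1 (by omega))
    omega

/-- L3: if no minus survives in blocks `K0, …, i`, then the surviving minuses
of the suffix are at most the surviving pluses of the prefix. -/
lemma aSuf_le_bPre (K0 : ℤ) (hK0 : 1 ≤ K0)
    (hmax : ∀ j, K0 ≤ j → j ≤ i → γ (j, i) ≤ bPre γ i j) :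
    ∀ K, K ≤ i + 1 → K0 ≤ K → aSuf γ i K ≤ bPre γ i K := by
  intro K hKi
  refine Int.le_induction_down
    (motive := fun K _ => K0 ≤ K → aSuf γ i K ≤ bPre γ i K) ?_ ?_ K hKi
  · intro _
    rw [aSuf_top (by omega)]
    exact Nat.zero_le _
  · intro K hKle ih hK0K
    have hK1 : 1 ≤ K - 1 := by omega
    have h1 := aSuf_rec (γ := γ) (i := i) (k := K - 1) (by omega)
    have h2 := bPre_rec (γ := γ) (i := i) (k := K - 1) hK1
    rw [show K - 1 + 1 = K by ring] at h1 h2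
    have h3 := hmax (K - 1) (by omega) (by omega)
    have h4 := ih (by omega)
    omega

end Stmt16Aux

namespace Stmt16Aux

lemma part1 (γ : ℤ × ℤ → ℕ) (i : ℤ) (hi1 : 1 ≤ i) :
    gammaMinus (gammaPlus γ i) i = γ := by
  by_cases hS : ∃ k, 1 ≤ k ∧ k ≤ i - 1 ∧ aSuf γ i (k + 1) < γ (k, i - 1)
  · obtain ⟨⟨hk1, hk2⟩, hmem, hmin⟩ := kPlus_spec hS
    set k' := kPlus γ i with hk'def
    have hk'i : k' < i := by omega
    have hval : ∀ p, gammaPlus γ i p =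
        if p = (k', i) then γ p + 1
        else if p = (k', i - 1) then γ p - 1 else γ p := by
      intro p
      simp only [gammaPlus, ← hk'def, hk'i, true_and]
    have v1 : gammaPlus γ i (k', i) = γ (k', i) + 1 := by rw [hval]; simp
    have v2 : gammaPlus γ i (k', i - 1) = γ (k', i - 1) - 1 := by
      rw [hval, if_neg (by intro hcon; rw [Prod.mk.injEq] at hcon; omega), if_pos rfl]
    have v3 : ∀ p, p ≠ (k', i) → p ≠ (k', i - 1) → gammaPlus γ i p = γ p := by
      intro p h1 h2
      rw [hval, if_neg h1, if_neg h2]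
    have hblock : ∀ j, j ≠ k' → sigBlock (gammaPlus γ i) i j = sigBlock γ i j := by
      intro j hj
      apply sigBlock_congr
      · apply v3 <;> (intro hcon; rw [Prod.mk.injEq] at hcon; omega)
      · apply v3 <;> (intro hcon; rw [Prod.mk.injEq] at hcon; omega)
    have hBk' : bPre γ i k' ≤ γ (k', i) := by
      have h1 := bPre_le_aSuf hi1 k' (by omega) (by omega) (fun j hj1 hj2 => hmin j hj1 hj2)
      have h2 := aSuf_rec (γ := γ) (i := i) (k := k') (by omega)
      omega
    have hbP'k' : bPre (gammaPlus γ i) i k' = bPre γ i k' := by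
      rw [bPre, bPre, sigPrefix_congr (fun j hj1 hj2 => hblock j (by omega))]
    have hstep : bPre γ i (k' + 1) = γ (k', i - 1) := by
      have h2 := bPre_rec (γ := γ) (i := i) (k := k') (by omega)
      omega
    have hstep' : bPre (gammaPlus γ i) i (k' + 1) + 1 = γ (k', i - 1) := by
      have h2 := bPre_rec (γ := gammaPlus γ i) (i := i) (k := k') (by omega)
      rw [v1, v2, hbP'k'] at h2
      omega
    have inv : ∀ K, k' + 1 ≤ K → K ≤ i + 1 →
        aSuf γ i K + 1 ≤ bPre γ i K ∧ bPre (gammaPlus γ i) i K + 1 = bPre γ i K := by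
      intro K hK
      refine Int.le_induction (motive := fun K _ => K ≤ i + 1 →
        aSuf γ i K + 1 ≤ bPre γ i K ∧ bPre (gammaPlus γ i) i K + 1 = bPre γ i K) ?_ ?_ K hK
      · intro _
        refine ⟨?_, ?_⟩ <;> omega
      · intro K hK1 ihh hKi
        obtain ⟨ih1, ih2⟩ := ihh (by omega)
        have e1 := aSuf_rec (γ := γ) (i := i) (k := K) (by omega)
        have e2 := bPre_rec (γ := γ) (i := i) (k := K) (by omega)
        have e3 := bPre_rec (γ := gammaPlus γ i) (i := i) (k := K) (by omega)
        have ev1 : gammaPlus γ i (K, i) = γ (K, i) := by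
          apply v3 <;> (intro hcon; rw [Prod.mk.injEq] at hcon; omega)
        have ev2 : gammaPlus γ i (K, i - 1) = γ (K, i - 1) := by
          apply v3 <;> (intro hcon; rw [Prod.mk.injEq] at hcon; omega)
        rw [ev1, ev2] at e3
        constructor <;> omega
    have hkM : kMinus (gammaPlus γ i) i = k' := by
      apply kMinus_eq_of (by omega) (by omega)
      · rw [hbP'k', v1]
        omega
      · intro j hj1 hj2
        obtain ⟨i1, i2⟩ := inv j (by omega) (by omega)
        have ej := aSuf_rec (γ := γ) (i := i) (k := j) hj2
        have evj : gammaPlus γ i (j, i) = γ (j, i) := by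
          apply v3 <;> (intro hcon; rw [Prod.mk.injEq] at hcon; omega)
        rw [evj]
        omega
    funext p
    have hgm : gammaMinus (gammaPlus γ i) i p =
        if p = (k', i) then gammaPlus γ i p - 1
        else if p = (k', i - 1) then gammaPlus γ i p + 1
        else gammaPlus γ i p := by
      simp only [gammaMinus, hkM, hk'i, true_and]
    rw [hgm]
    by_cases h1 : p = (k', i)
    · rw [if_pos h1, h1, v1]
      omega
    · rw [if_neg h1]
      by_cases h2 : p = (k', i - 1)
      · rw [if_pos h2, h2, v2]
        omega
      · rw [if_neg h2, v3 p h1 h2]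
  · push_neg at hS
    have hk' : kPlus γ i = i := kPlus_eq_i fun j h1 h2 => hS j h1 h2
    have hval : ∀ p, gammaPlus γ i p = if p = (i, i) then γ p + 1 else γ p := by
      intro p
      simp only [gammaPlus, hk', lt_irrefl, false_and, if_false]
    have v1 : gammaPlus γ i (i, i) = γ (i, i) + 1 := by rw [hval]; simp
    have v3 : ∀ p, p ≠ (i, i) → gammaPlus γ i p = γ p := by
      intro p h
      rw [hval, if_neg h]
    have hblock : ∀ j, j ≠ i → sigBlock (gammaPlus γ i) i j = sigBlock γ i j := by
      intro j hj
      apply sigBlock_congr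
      · apply v3; intro hcon; rw [Prod.mk.injEq] at hcon; omega
      · apply v3; intro hcon; rw [Prod.mk.injEq] at hcon; omega
    have hpre : bPre (gammaPlus γ i) i i = bPre γ i i := by
      rw [bPre, bPre, sigPrefix_congr (fun j hj1 hj2 => hblock j (by omega))]
    have hBA : bPre γ i i ≤ γ (i, i) := by
      have h1 := bPre_le_aSuf hi1 i hi1 (by omega) fun j a b => hS j a (by omega)
      have h2 := aSuf_rec (γ := γ) (i := i) (k := i) le_rfl
      have h3 := aSuf_top (γ := γ) (i := i) (k := i + 1) (by omega)
      omega
    have hkM : kMinus (gammaPlus γ i) i = i := by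
      apply kMinus_eq_of hi1 le_rfl
      · rw [hpre, v1]
        omega
      · intro j hj1 hj2
        omega
    funext p
    have hgm : gammaMinus (gammaPlus γ i) i p =
        if p = (i, i) then gammaPlus γ i p - 1 else gammaPlus γ i p := by
      simp only [gammaMinus, hkM, lt_irrefl, false_and, if_false]
    rw [hgm]
    by_cases h1 : p = (i, i)
    · rw [if_pos h1, h1, v1]
      omega
    · rw [if_neg h1, v3 p h1]

end Stmt16Aux

namespace Stmt16Aux

lemma part2 (γ : ℤ × ℤ → ℕ) (i : ℤ) (hi1 : 1 ≤ i) (ha : 0 < aCount γ i) :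
    gammaPlus (gammaMinus γ i) i = γ := by
  obtain ⟨⟨hk1, hk2⟩, hmem, hmax⟩ := kMinus_spec (aCount_pos_nonempty ha hi1)
  set k'' := kMinus γ i with hkdef
  have hval : ∀ p, gammaMinus γ i p =
      if p = (k'', i) then γ p - 1
      else if k'' < i ∧ p = (k'', i - 1) then γ p + 1 else γ p := by
    intro p
    simp only [gammaMinus, ← hkdef]
  have v1 : gammaMinus γ i (k'', i) = γ (k'', i) - 1 := by rw [hval]; simp
  have v3 : ∀ p, p ≠ (k'', i) → p ≠ (k'', i - 1) → gammaMinus γ i p = γ p := by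
    intro p h1 h2
    rw [hval, if_neg h1, if_neg (by intro hcon; exact h2 hcon.2)]
  have hblock : ∀ j, j ≠ k'' → sigBlock (gammaMinus γ i) i j = sigBlock γ i j := by
    intro j hj
    apply sigBlock_congr
    · apply v3 <;> (intro hcon; rw [Prod.mk.injEq] at hcon; omega)
    · apply v3 <;> (intro hcon; rw [Prod.mk.injEq] at hcon; omega)
  have hsuf : ∀ K, k'' < K → aSuf (gammaMinus γ i) i K = aSuf γ i K := by
    intro K hK
    rw [aSuf, aSuf, sigSuffix_congr (fun j hj1 hj2 => hblock j (by omega))]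
  have hA1 : aSuf γ i (k'' + 1) ≤ bPre γ i (k'' + 1) :=
    aSuf_le_bPre (k'' + 1) (by omega) (fun j a b => hmax j (by omega) b) (k'' + 1) (by omega) le_rfl
  have hB1 : bPre γ i (k'' + 1) = γ (k'', i - 1) := by
    have h2 := bPre_rec (γ := γ) (i := i) (k := k'') (by omega)
    omega
  have hAk : aSuf γ i k'' = γ (k'', i) := by
    have h1 := aSuf_rec (γ := γ) (i := i) (k := k'') (by omega)
    omega
  have v2ge : γ (k'', i - 1) ≤ gammaMinus γ i (k'', i - 1) := by
    rw [hval, if_neg (by intro hcon; rw [Prod.mk.injEq] at hcon; omega)]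
    split_ifs <;> omega
  have hA''k : aSuf (gammaMinus γ i) i k'' + 1 = γ (k'', i) := by
    have h1 := aSuf_rec (γ := gammaMinus γ i) (i := i) (k := k'') (by omega)
    rw [v1, hsuf (k'' + 1) (by omega)] at h1
    omega
  have inv : ∀ K, K ≤ k'' → 1 ≤ K →
      bPre γ i K + 1 ≤ aSuf γ i K ∧ aSuf (gammaMinus γ i) i K + 1 = aSuf γ i K := by
    intro K hK
    refine Int.le_induction_down (motive := fun K _ => 1 ≤ K →
      bPre γ i K + 1 ≤ aSuf γ i K ∧ aSuf (gammaMinus γ i) i K + 1 = aSuf γ i K) ?_ ?_ K hK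
    · intro _
      constructor <;> omega
    · intro K hKle ih h1K
      obtain ⟨ih1, ih2⟩ := ih (by omega)
      have e1 := aSuf_rec (γ := γ) (i := i) (k := K - 1) (by omega)
      have e2 := bPre_rec (γ := γ) (i := i) (k := K - 1) (by omega)
      have e3 := aSuf_rec (γ := gammaMinus γ i) (i := i) (k := K - 1) (by omega)
      rw [show K - 1 + 1 = K by ring] at e1 e2 e3
      have ev1 : gammaMinus γ i (K - 1, i) = γ (K - 1, i) := by
        apply v3 <;> (intro hcon; rw [Prod.mk.injEq] at hcon; omega)
      have ev2 : gammaMinus γ i (K - 1, i - 1) = γ (K - 1, i - 1) := by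
        apply v3 <;> (intro hcon; rw [Prod.mk.injEq] at hcon; omega)
      rw [ev1, ev2] at e3
      constructor <;> omega
  have hminfact : ∀ j, 1 ≤ j → j < k'' →
      gammaMinus γ i (j, i - 1) ≤ aSuf (gammaMinus γ i) i (j + 1) := by
    intro j hj1 hj2
    obtain ⟨i1, i2⟩ := inv (j + 1) (by omega) (by omega)
    have e2 := bPre_rec (γ := γ) (i := i) (k := j) (by omega)
    have evj : gammaMinus γ i (j, i - 1) = γ (j, i - 1) := by
      apply v3 <;> (intro hcon; rw [Prod.mk.injEq] at hcon; omega)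
    rw [evj]
    omega
  have hkP : kPlus (gammaMinus γ i) i = k'' := by
    by_cases hki : k'' < i
    · apply kPlus_eq_of (by omega) (by omega)
      · rw [hsuf (k'' + 1) (by omega)]
        have hv2 : gammaMinus γ i (k'', i - 1) = γ (k'', i - 1) + 1 := by
          rw [hval, if_neg (by intro hcon; rw [Prod.mk.injEq] at hcon; omega),
            if_pos ⟨hki, rfl⟩]
        rw [hv2]
        omega
      · exact hminfact
    · rw [show k'' = i by omega]
      apply kPlus_eq_i
      intro j hj1 hj2
      exact hminfact j hj1 (by omega)
  funext p
  have hgm : gammaPlus (gammaMinus γ i) i p =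
      if p = (k'', i) then gammaMinus γ i p + 1
      else if k'' < i ∧ p = (k'', i - 1) then gammaMinus γ i p - 1
      else gammaMinus γ i p := by
    simp only [gammaPlus, hkP]
  rw [hgm]
  by_cases h1 : p = (k'', i)
  · rw [if_pos h1, h1, v1]
    omega
  · rw [if_neg h1]
    by_cases h2 : k'' < i ∧ p = (k'', i - 1)
    · rw [if_pos h2, h2.2]
      have hv2 : gammaMinus γ i (k'', i - 1) = γ (k'', i - 1) + 1 := by
        rw [hval, if_neg (by intro hcon; rw [Prod.mk.injEq] at hcon; omega),
          if_pos ⟨h2.1, rfl⟩]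
      rw [hv2]
      omega
    · rw [if_neg h2, hval, if_neg h1, if_neg h2]

end Stmt16Aux

theorem stmt16 (n i : ℤ) (hn : 1 ≤ n) (hi1 : 1 ≤ i) (hin : i ≤ n)
    (γ : ℤ × ℤ → ℕ)
    (hsupp : ∀ p : ℤ × ℤ, γ p ≠ 0 → 1 ≤ p.1 ∧ p.1 ≤ p.2 ∧ p.2 ≤ n) :
    gammaMinus (gammaPlus γ i) i = γ ∧
    (0 < aCount γ i → gammaPlus (gammaMinus γ i) i = γ) := by
  exact ⟨Stmt16Aux.part1 γ i hi1, fun ha => Stmt16Aux.part2 γ i hi1 ha⟩
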